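/- Let (E, B) be a measurable space, P_s (s ≥ 0) a family of Markov kernels on E, and μ_t a probability measure on [0,∞). Define the subordinated operator P_t^B f(x) = ∫_0^∞ P_s f(x) μ_t(ds) for bounded nonnegative measurable f. Suppose for some p > 1 and a function Φ: (0,∞) × E × E → [0,∞) the Harnack inequality (P_s f(x))^p ≤ e^{Φ(s,x,y)} P_s f^p(y) holds for all s > 0, x, y ∈ E, f ∈ B_b^+(E). Then (P_t^B f(x))^p ≤ (P_t^B f^p(y)) · (∫_0^∞ e^{Φ(s,x,y)/(p-1)} μ_t(ds))^{p-1}, provided the latter integral is finite. -/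

import Mathlib

open MeasureTheory Real Set

/-- Subordination of a Harnack inequality via Hölder's inequality. -/
theorem stmt_8 {E : Type*} [MeasurableSpace E]
    (P : ℝ → (E → ℝ) → (E → ℝ))
    (μt : Measure ℝ) [IsProbabilityMeasure μt] (hsupp : μt (Iio (0:ℝ)) = 0)
    (p : ℝ) (hp : 1 < p)
    (Φ : ℝ → E → E → ℝ) (hΦ : ∀ s x y, 0 ≤ Φ s x y)
    (f : E → ℝ) (hf_meas : Measurable f) (hf_nonneg : ∀ z, 0 ≤ f z)
    (hf_bdd : ∃ M, ∀ z, f z ≤ M)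
    (x y : E)
    -- the semigroup is nonnegative on nonnegative functions
    (hpos : ∀ s (g : E → ℝ), (∀ z, 0 ≤ g z) → ∀ z, 0 ≤ P s g z)
    -- the Harnack inequality for P_s
    (hHarnack : ∀ s, 0 < s → (P s f x) ^ p ≤ Real.exp (Φ s x y) * P s (fun z => f z ^ p) y)
    -- integrability assumptions
    (hInt1 : Integrable (fun s => P s f x) μt)
    (hInt2 : Integrable (fun s => P s (fun z => f z ^ p) y) μt)
    (hInt3 : Integrable (fun s => Real.exp (Φ s x y / (p - 1))) μt) :
    (∫ s in Ioi (0:ℝ), P s f x ∂μt) ^ p ≤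
      (∫ s in Ioi (0:ℝ), P s (fun z => f z ^ p) y ∂μt) *
        (∫ s in Ioi (0:ℝ), Real.exp (Φ s x y / (p - 1)) ∂μt) ^ (p - 1) := by
  have hp0 : (0:ℝ) < p := lt_trans one_pos hp
  have hp1 : (0:ℝ) < p - 1 := by linarith
  set q : ℝ := p / (p - 1) with hq_def
  have hpq : p.HolderConjugate q := (Real.holderConjugate_iff_eq_conjExponent hp).mpr rfl
  have hq0 : (0:ℝ) < q := hpq.symm.pos
  set ν : Measure ℝ := μt.restrict (Ioi 0) with hν
  set F : ℝ → ℝ := fun s => P s (fun z => f z ^ p) y with hF_def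
  set G : ℝ → ℝ := fun s => Real.exp (Φ s x y / (p - 1)) with hG_def
  have hF_nonneg : ∀ s, 0 ≤ F s := fun s =>
    hpos s _ (fun z => Real.rpow_nonneg (hf_nonneg z) p) y
  have hG_pos : ∀ s, 0 < G s := fun s => Real.exp_pos _
  have hFint : Integrable F ν := hInt2.restrict
  have hGint : Integrable G ν := hInt3.restrict
  set h : ℝ → ℝ := fun s => F s ^ (1 / p) with hh_def
  set g : ℝ → ℝ := fun s => G s ^ ((p - 1) / p) with hg_def
  have hh_nonneg : ∀ s, 0 ≤ h s := fun s => Real.rpow_nonneg (hF_nonneg s) _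
  have hg_nonneg : ∀ s, 0 ≤ g s := fun s => Real.rpow_nonneg (hG_pos s).le _
  -- key pointwise identities
  have hhp : ∀ s, h s ^ p = F s := by
    intro s
    rw [hh_def, ← Real.rpow_mul (hF_nonneg s), one_div_mul_cancel hp0.ne', Real.rpow_one]
  have hgq : ∀ s, g s ^ q = G s := by
    intro s
    rw [hg_def, ← Real.rpow_mul (hG_pos s).le]
    have : (p - 1) / p * q = 1 := by
      rw [hq_def]; field_simp
    rw [this, Real.rpow_one]
  have hg_eq : ∀ s, g s = Real.exp (Φ s x y / p) := by
    intro s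
    show Real.exp (Φ s x y / (p - 1)) ^ ((p - 1) / p) = _
    rw [← Real.exp_mul]
    congr 1
    field_simp
  -- measurability
  have hh_aesm : AEStronglyMeasurable h ν :=
    (Real.continuous_rpow_const (by positivity)).comp_aestronglyMeasurable
      hFint.aestronglyMeasurable
  have hg_aesm : AEStronglyMeasurable g ν :=
    (Real.continuous_rpow_const (by positivity)).comp_aestronglyMeasurable
      hGint.aestronglyMeasurable
  -- membership in Lp
  have hp_ne : (ENNReal.ofReal p) ≠ 0 := by
    simp [ENNReal.ofReal_eq_zero, not_le, hp0]
  have hq_ne : (ENNReal.ofReal q) ≠ 0 := by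
    simp [ENNReal.ofReal_eq_zero, not_le, hq0]
  have hh_mem : MemLp h (ENNReal.ofReal p) ν := by
    refine (memLp_norm_rpow_iff hh_aesm hp_ne ENNReal.ofReal_ne_top).mp ?_
    have h1 : (fun s => ‖h s‖ ^ (ENNReal.ofReal p).toReal) = F := by
      funext s
      rw [Real.norm_of_nonneg (hh_nonneg s), ENNReal.toReal_ofReal hp0.le, hhp s]
    rw [h1, ENNReal.div_self hp_ne ENNReal.ofReal_ne_top]
    exact (memLp_one_iff_integrable).mpr hFint
  have hg_mem : MemLp g (ENNReal.ofReal q) ν := by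
    refine (memLp_norm_rpow_iff hg_aesm hq_ne ENNReal.ofReal_ne_top).mp ?_
    have h1 : (fun s => ‖g s‖ ^ (ENNReal.ofReal q).toReal) = G := by
      funext s
      rw [Real.norm_of_nonneg (hg_nonneg s), ENNReal.toReal_ofReal hq0.le, hgq s]
    rw [h1, ENNReal.div_self hq_ne ENNReal.ofReal_ne_top]
    exact (memLp_one_iff_integrable).mpr hGint
  -- pointwise bound on Ioi 0
  have hbound : ∀ s ∈ Ioi (0:ℝ), P s f x ≤ h s * g s := by
    intro s hs
    have ha : 0 ≤ P s f x := hpos s f hf_nonneg x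
    have hb : 0 ≤ h s * g s := mul_nonneg (hh_nonneg s) (hg_nonneg s)
    refine (Real.rpow_le_rpow_iff ha hb hp0).mp ?_
    have : (h s * g s) ^ p = Real.exp (Φ s x y) * F s := by
      rw [Real.mul_rpow (hh_nonneg s) (hg_nonneg s), hhp s, hg_eq s, ← Real.exp_mul,
        div_mul_cancel₀ _ hp0.ne', mul_comm]
    rw [this]
    exact hHarnack s hs
  -- integrability of the product via Young's inequality
  have hhg_int : Integrable (fun s => h s * g s) ν := by
    refine Integrable.mono' ((hFint.div_const p).add (hGint.div_const q))
      (hh_aesm.mul hg_aesm) (ae_of_all _ fun s => ?_)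
    rw [Real.norm_of_nonneg (mul_nonneg (hh_nonneg s) (hg_nonneg s))]
    have := Real.young_inequality_of_nonneg (hh_nonneg s) (hg_nonneg s) hpq
    rwa [hhp s, hgq s] at this
  -- integral comparison
  have step1 : (∫ s in Ioi (0:ℝ), P s f x ∂μt) ≤ ∫ s, h s * g s ∂ν := by
    refine integral_mono_ae hInt1.restrict hhg_int ?_
    refine (ae_restrict_iff' measurableSet_Ioi).mpr (ae_of_all _ fun s hs => hbound s hs)
  -- Hölder
  have step2 : (∫ s, h s * g s ∂ν) ≤
      (∫ s, F s ∂ν) ^ (1 / p) * (∫ s, G s ∂ν) ^ (1 / q) := by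
    have := integral_mul_le_Lp_mul_Lq_of_nonneg hpq (ae_of_all _ hh_nonneg)
      (ae_of_all _ hg_nonneg) hh_mem hg_mem
    have e1 : (∫ s, h s ^ p ∂ν) = ∫ s, F s ∂ν := integral_congr_ae (ae_of_all _ hhp)
    have e2 : (∫ s, g s ^ q ∂ν) = ∫ s, G s ∂ν := integral_congr_ae (ae_of_all _ hgq)
    rwa [e1, e2] at this
  have hA : 0 ≤ ∫ s, F s ∂ν := integral_nonneg hF_nonneg
  have hB : 0 ≤ ∫ s, G s ∂ν := integral_nonneg fun s => (hG_pos s).le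
  have hL : 0 ≤ ∫ s in Ioi (0:ℝ), P s f x ∂μt :=
    integral_nonneg fun s => hpos s f hf_nonneg x
  calc (∫ s in Ioi (0:ℝ), P s f x ∂μt) ^ p
      ≤ ((∫ s, F s ∂ν) ^ (1 / p) * (∫ s, G s ∂ν) ^ (1 / q)) ^ p :=
        Real.rpow_le_rpow hL (step1.trans step2) hp0.le
    _ = (∫ s, F s ∂ν) * (∫ s, G s ∂ν) ^ (p - 1) := by
        rw [Real.mul_rpow (Real.rpow_nonneg hA _) (Real.rpow_nonneg hB _),
          ← Real.rpow_mul hA, ← Real.rpow_mul hB, one_div_mul_cancel hp0.ne',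
          Real.rpow_one]
        congr 2
        rw [hq_def]
        field_simp
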